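/- arXiv:2009.06832 — 3 statements merged into one kernel-verified Lean document; each statement's English description precedes it below -/
import Mathlib

section
/- Let γ ∈ (0,1), q ∈ (0, 1/2), n ≥ 1, and let X_1, …, X_n be independent standard normal random variables on a probability space (Ω, P). Then P(∑_{i=1}^n (q + X_i) > √n · Φ⁻¹(1 − γ)) = 1 − Φ(Φ⁻¹(1 − γ) − q√n) > γ. Hence the constant interference sequence Δ_i = q (which satisfies |Δ_i| ≤ q) makes the false alarm probability of the n-dimensional Neyman–Pearson test with size γ strictly exceed γ; in particular, the selectivity of the Neyman–Pearson test contains no q > 0. -/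
open MeasureTheory ProbabilityTheory Real Filter
open scoped ENNReal NNReal

/-- The cumulative distribution function `Φ` of the standard normal law `N(0,1)`. -/
noncomputable def Phi (x : ℝ) : ℝ := ((gaussianReal 0 1) (Set.Iic x)).toReal

/-- The inverse `Φ⁻¹` of the standard normal cdf (on `(0,1)`). -/
noncomputable def PhiInv (y : ℝ) : ℝ := Function.invFun Phi y

lemma aux_pdf_mul (a b t : ℝ) (ha : 0 < a) (hb : 0 < b) (x : ℝ) :
    ((√(2 * π * a))⁻¹ * rexp (- x^2 / (2 * a))) * ((√(2 * π * b))⁻¹ * rexp (- (t - x)^2 / (2 * b)))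
      = ((√(2 * π * a))⁻¹ * (√(2 * π * b))⁻¹ * rexp (- t^2 / (2 * (a + b))))
        * rexp (-(((a + b)/(2*a*b)) * (x - a * t / (a + b))^2)) := by
  have hab : a + b ≠ 0 := by positivity
  rw [mul_mul_mul_comm, ← Real.exp_add, mul_assoc _ (rexp _) (rexp _), ← Real.exp_add]
  congr 1
  congr 1
  field_simp
  ring

lemma aux_const (a b : ℝ) (ha : 0 < a) (hb : 0 < b) :
    (√(2 * π * a))⁻¹ * (√(2 * π * b))⁻¹ * √(π / ((a + b)/(2*a*b)))
      = (√(2 * π * (a + b)))⁻¹ := by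
  have hab : 0 < a + b := by positivity
  have hpi := Real.pi_pos
  rw [← Real.sqrt_inv (2 * π * a), ← Real.sqrt_inv (2 * π * b),
    ← Real.sqrt_mul (by positivity), ← Real.sqrt_mul (by positivity), ← Real.sqrt_inv]
  congr 1
  field_simp

lemma aux_integral (v w : ℝ≥0) (hv : v ≠ 0) (hw : w ≠ 0) (t : ℝ) :
    ∫ x, gaussianPDFReal 0 v x * gaussianPDFReal 0 w (t - x)
      = gaussianPDFReal 0 (v + w) t := by
  have ha : (0:ℝ) < v := by positivity
  have hb : (0:ℝ) < w := by positivity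
  have hk : (0:ℝ) < ((v:ℝ) + w)/(2*v*w) := by positivity
  have h1 : ∀ x : ℝ, gaussianPDFReal 0 v x * gaussianPDFReal 0 w (t - x)
      = ((√(2 * π * v))⁻¹ * (√(2 * π * w))⁻¹ * rexp (- t^2 / (2 * ((v:ℝ) + w))))
        * rexp (-((((v:ℝ) + w)/(2*v*w)) * (x - v * t / ((v:ℝ) + w))^2)) := by
    intro x
    have := aux_pdf_mul v w t ha hb x
    simpa [gaussianPDFReal] using this
  simp only [h1]
  rw [integral_const_mul]
  have h2 : ∫ x : ℝ, rexp (-((((v:ℝ) + w)/(2*v*w)) * (x - v * t / ((v:ℝ) + w))^2))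
      = √(π / (((v:ℝ) + w)/(2*v*w))) := by
    have := integral_sub_right_eq_self (μ := volume)
      (fun x : ℝ => rexp (-(((v:ℝ) + w)/(2*v*w)) * x^2)) ((v:ℝ) * t / ((v:ℝ) + w))
    simp only [neg_mul] at this
    rw [this]
    simp_rw [← neg_mul]
    exact integral_gaussian _
  rw [h2, mul_right_comm, aux_const v w ha hb, gaussianPDFReal]
  push_cast
  rw [sub_zero]

lemma aux_integrable (v w : ℝ≥0) (hv : v ≠ 0) (hw : w ≠ 0) (t : ℝ) :
    Integrable (fun x => gaussianPDFReal 0 v x * gaussianPDFReal 0 w (t - x)) := by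
  have ha : (0:ℝ) < v := by positivity
  have hb : (0:ℝ) < w := by positivity
  have hk : (0:ℝ) < ((v:ℝ) + w)/(2*v*w) := by positivity
  have h1 : (fun x : ℝ => gaussianPDFReal 0 v x * gaussianPDFReal 0 w (t - x))
      = fun x => ((√(2 * π * v))⁻¹ * (√(2 * π * w))⁻¹ * rexp (- t^2 / (2 * ((v:ℝ) + w))))
        * rexp (-(((v:ℝ) + w)/(2*v*w)) * (x - v * t / ((v:ℝ) + w))^2) := by
    ext x
    have := aux_pdf_mul v w t ha hb x
    simp only [neg_mul]
    simpa [gaussianPDFReal] using this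
  rw [h1]
  exact ((integrable_exp_neg_mul_sq hk).comp_sub_right _).const_mul _

lemma aux_lintegral (v w : ℝ≥0) (hv : v ≠ 0) (hw : w ≠ 0) (t : ℝ) :
    ∫⁻ x, gaussianPDF 0 v x * gaussianPDF 0 w (t - x) = gaussianPDF 0 (v + w) t := by
  simp_rw [gaussianPDF,
    ← ENNReal.ofReal_mul (gaussianPDFReal_nonneg 0 v _)]
  rw [← ofReal_integral_eq_lintegral_ofReal (aux_integrable v w hv hw t)
    (ae_of_all _ fun x => mul_nonneg (gaussianPDFReal_nonneg _ _ _) (gaussianPDFReal_nonneg _ _ _)),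
    aux_integral v w hv hw t]

lemma gauss_conv (v w : ℝ≥0) :
    (gaussianReal 0 v).conv (gaussianReal 0 w) = gaussianReal 0 (v + w) := by
  rcases eq_or_ne v 0 with rfl | hv
  · rw [gaussianReal_zero_var, zero_add]
    exact MeasureTheory.Measure.dirac_zero_conv _
  rcases eq_or_ne w 0 with rfl | hw
  · rw [gaussianReal_zero_var, add_zero]
    exact MeasureTheory.Measure.conv_dirac_zero _
  have hvw : v + w ≠ 0 := by simp [hv]
  ext s hs
  have hpre : MeasurableSet ((fun p : ℝ × ℝ => p.1 + p.2) ⁻¹' s) :=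
    hs.preimage measurable_add
  rw [show (gaussianReal 0 v).conv (gaussianReal 0 w)
      = Measure.map (fun p : ℝ × ℝ => p.1 + p.2) ((gaussianReal 0 v).prod (gaussianReal 0 w))
      from rfl,
    Measure.map_apply measurable_add hs,
    Measure.prod_apply hpre]
  have hinner : ∀ x : ℝ, gaussianReal 0 w (Prod.mk x ⁻¹' ((fun p : ℝ × ℝ => p.1 + p.2) ⁻¹' s))
      = ∫⁻ u in s, gaussianPDF 0 w (u - x) := by
    intro x
    have hpre2 : MeasurableSet ((fun y : ℝ => x + y) ⁻¹' s) :=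
      hs.preimage (measurable_const_add x)
    have : (Prod.mk x ⁻¹' ((fun p : ℝ × ℝ => p.1 + p.2) ⁻¹' s)) = (fun y => x + y) ⁻¹' s := rfl
    rw [this, gaussianReal_of_var_ne_zero 0 hw, withDensity_apply _ hpre2]
    have key := (measurePreserving_add_left volume x).setLIntegral_comp_preimage_emb
      (measurableEmbedding_addLeft x) (fun u => gaussianPDF 0 w (u - x)) s
    simp only [add_sub_cancel_left] at key
    rw [← key]
  simp_rw [hinner]
  rw [gaussianReal_of_var_ne_zero 0 hv,
    lintegral_withDensity_eq_lintegral_mul _ (measurable_gaussianPDF 0 v)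
      (by
        apply Measurable.lintegral_prod_right (f := fun x u => gaussianPDF 0 w (u - x))
        exact (measurable_gaussianPDF 0 w).comp (measurable_snd.sub measurable_fst))]
  simp only [Pi.mul_apply]
  have hswap : ∫⁻ x, gaussianPDF 0 v x * ∫⁻ u in s, gaussianPDF 0 w (u - x)
      = ∫⁻ u in s, ∫⁻ x, gaussianPDF 0 v x * gaussianPDF 0 w (u - x) := by
    rw [← lintegral_lintegral_swap]
    · refine lintegral_congr fun x => ?_
      rw [← lintegral_const_mul' _ _ (show gaussianPDF 0 v x ≠ ⊤ by simp [gaussianPDF])]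
    · exact (((measurable_gaussianPDF 0 v).comp measurable_fst).mul
        ((measurable_gaussianPDF 0 w).comp (measurable_snd.sub measurable_fst))).aemeasurable
  rw [hswap, gaussianReal_of_var_ne_zero 0 hvw, withDensity_apply _ hs]
  exact setLIntegral_congr_fun hs (fun u _ => aux_lintegral v w hv hw u)

lemma map_sum_gauss {Ω : Type*} [MeasurableSpace Ω] (P : Measure Ω) [IsProbabilityMeasure P]
    {n : ℕ} (X : Fin n → Ω → ℝ) (hmeas : ∀ i, Measurable (X i))
    (hindep : iIndepFun X P)
    (hdist : ∀ i, Measure.map (X i) P = gaussianReal 0 1)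
    (s : Finset (Fin n)) :
    Measure.map (fun ω => ∑ i ∈ s, X i ω) P = gaussianReal 0 (s.card : ℝ≥0) := by
  classical
  induction s using Finset.induction_on with
  | empty =>
      simp only [Finset.sum_empty, Finset.card_empty, Nat.cast_zero, gaussianReal_zero_var]
      simp [Measure.map_const]
  | insert _ _ ha ih =>
      rename_i a s
      have hS : Measurable (fun ω => ∑ i ∈ s, X i ω) := by
        apply Finset.measurable_sum
        exact fun i _ => hmeas i
      have hIndep : IndepFun (X a) (fun ω => ∑ i ∈ s, X i ω) P := by
        have := (hindep.indepFun_finset_sum_of_notMem hmeas ha).symm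
        convert this using 1
        ext ω
        simp [Finset.sum_apply]
      have hpair : Measure.map (fun ω => (X a ω, ∑ i ∈ s, X i ω)) P
          = (Measure.map (X a) P).prod (Measure.map (fun ω => ∑ i ∈ s, X i ω) P) :=
        (indepFun_iff_map_prod_eq_prod_map_map (hmeas a).aemeasurable hS.aemeasurable).mp hIndep
      have hmap : Measure.map (fun ω => ∑ i ∈ insert a s, X i ω) P
          = ((Measure.map (X a) P).prod (Measure.map (fun ω => ∑ i ∈ s, X i ω) P)).map
            (fun p : ℝ × ℝ => p.1 + p.2) := by
        rw [← hpair, Measure.map_map measurable_add ((hmeas a).prodMk hS)]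
        congr 1
        ext ω
        simp [Finset.sum_insert ha]
      rw [hmap, hdist a, ih]
      have := gauss_conv 1 (s.card : ℝ≥0)
      rw [show (gaussianReal 0 1).conv (gaussianReal 0 (s.card : ℝ≥0))
        = ((gaussianReal 0 1).prod (gaussianReal 0 (s.card : ℝ≥0))).map
            (fun p : ℝ × ℝ => p.1 + p.2) from rfl] at this
      rw [this, Finset.card_insert_of_notMem ha]
      congr 1
      push_cast
      ring


lemma phi_eq_integral (x : ℝ) : Phi x = ∫ t in Set.Iic x, gaussianPDFReal 0 1 t := by
  rw [Phi, gaussianReal_of_var_ne_zero 0 one_ne_zero, withDensity_apply _ measurableSet_Iic,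
    gaussianPDF_def]
  rw [← ofReal_integral_eq_lintegral_ofReal ((integrable_gaussianPDFReal 0 1).integrableOn)
    (ae_of_all _ fun t => gaussianPDFReal_nonneg 0 1 t),
    ENNReal.toReal_ofReal (integral_nonneg fun t => gaussianPDFReal_nonneg 0 1 t)]

lemma phi_continuous : Continuous Phi := by
  have h : ∀ x : ℝ, Phi x = Phi 0 + ∫ t in (0:ℝ)..x, gaussianPDFReal 0 1 t := by
    intro x
    have := intervalIntegral.integral_Iic_sub_Iic
      ((integrable_gaussianPDFReal 0 1).integrableOn) ((integrable_gaussianPDFReal 0 1).integrableOn)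
      (a := 0) (b := x)
    rw [phi_eq_integral, phi_eq_integral]
    linarith
  have : Phi = fun x => Phi 0 + ∫ t in (0:ℝ)..x, gaussianPDFReal 0 1 t := funext h
  rw [this]
  exact continuous_const.add ((integrable_gaussianPDFReal 0 1).continuous_primitive 0)

lemma phi_strictMono : StrictMono Phi := by
  intro x y hxy
  have hfin : ∀ z : ℝ, gaussianReal 0 1 (Set.Iic z) ≠ ⊤ := fun z => measure_ne_top _ _
  rw [Phi, Phi]
  rw [ENNReal.toReal_lt_toReal (hfin x) (hfin y)]
  have hsplit : Set.Iic y = Set.Iic x ∪ Set.Ioc x y := by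
    rw [Set.Iic_union_Ioc_eq_Iic hxy.le]
  rw [hsplit, measure_union (Set.Iic_disjoint_Ioc le_rfl) measurableSet_Ioc]
  have hpos : 0 < gaussianReal 0 1 (Set.Ioc x y) := by
    rcases eq_or_lt_of_le (zero_le : 0 ≤ gaussianReal 0 1 (Set.Ioc x y)) with h | h
    · exfalso
      have := (gaussianReal_absolutelyContinuous' 0 one_ne_zero) h.symm
      rw [Real.volume_Ioc] at this
      simp only [ENNReal.ofReal_eq_zero, sub_nonpos] at this
      linarith
    · exact h
  have := ENNReal.lt_add_right (hfin x) hpos.ne'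
  exact this

lemma phi_mem_Ioo (x : ℝ) : Phi x ∈ Set.Ioo (0:ℝ) 1 := by
  constructor
  · have := phi_strictMono (show x - 1 < x by linarith)
    have h0 : 0 ≤ Phi (x - 1) := ENNReal.toReal_nonneg
    linarith
  · have := phi_strictMono (show x < x + 1 by linarith)
    have h1 : Phi (x + 1) ≤ 1 := by
      rw [Phi]
      rw [show (1:ℝ) = (1 : ℝ≥0∞).toReal from rfl]
      exact ENNReal.toReal_mono ENNReal.one_ne_top (by simpa using prob_le_one)
    linarith

lemma phi_tendsto_atTop : Filter.Tendsto Phi Filter.atTop (nhds 1) := by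
  have h := MeasureTheory.tendsto_measure_Iic_atTop (gaussianReal 0 1)
  simp only [measure_univ] at h
  have := (ENNReal.tendsto_toReal ENNReal.one_ne_top).comp h
  simpa [show Phi = fun x => ((gaussianReal 0 1) (Set.Iic x)).toReal from rfl, Function.comp_def] using this

lemma phi_tendsto_atBot : Filter.Tendsto Phi Filter.atBot (nhds 0) := by
  have hempty : ⋂ x : ℝ, Set.Iic x = ∅ := by
    ext z
    simp only [Set.mem_iInter, Set.mem_Iic, Set.mem_empty_iff_false, iff_false, not_forall,
      not_le]
    exact ⟨z - 1, by linarith⟩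
  have h := MeasureTheory.tendsto_measure_iInter_atBot (μ := gaussianReal 0 1)
    (s := fun x : ℝ => Set.Iic x)
    (fun x => measurableSet_Iic.nullMeasurableSet)
    (fun a b hab => Set.Iic_subset_Iic.mpr hab) ⟨0, measure_ne_top _ _⟩
  rw [hempty, measure_empty] at h
  have := (ENNReal.tendsto_toReal (by simp : (0:ℝ≥0∞) ≠ ⊤)).comp h
  simpa [show Phi = fun x => ((gaussianReal 0 1) (Set.Iic x)).toReal from rfl, Function.comp_def] using this

lemma phi_surj {y : ℝ} (hy : y ∈ Set.Ioo (0:ℝ) 1) : ∃ x, Phi x = y := by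
  obtain ⟨a, ha⟩ := (phi_tendsto_atBot.eventually_lt_const hy.1).exists
  obtain ⟨b, hb⟩ := (phi_tendsto_atTop.eventually_const_lt hy.2).exists
  have hab : a ≤ b := by
    by_contra h
    push_neg at h
    have := phi_strictMono h
    linarith
  have := intermediate_value_Icc hab phi_continuous.continuousOn
  have hmem : y ∈ Set.Icc (Phi a) (Phi b) := ⟨ha.le, hb.le⟩
  obtain ⟨x, _, hx⟩ := this hmem
  exact ⟨x, hx⟩

lemma phi_phiInv {y : ℝ} (hy : y ∈ Set.Ioo (0:ℝ) 1) : Phi (PhiInv y) = y :=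
  Function.invFun_eq (phi_surj hy)


/-- under the constant interference Δ_i = q with 0 < q < 1/2, the false
alarm probability of the n-dimensional Neyman–Pearson test with size γ equals
1 - Φ(Φ⁻¹(1-γ) - q√n) and strictly exceeds γ. -/
theorem stmt5 {Ω : Type*} [MeasurableSpace Ω] (P : Measure Ω) [IsProbabilityMeasure P]
    (γ : ℝ) (hγ : γ ∈ Set.Ioo (0 : ℝ) 1) (q : ℝ) (hq : q ∈ Set.Ioo (0 : ℝ) (1/2))
    (n : ℕ) (hn : 1 ≤ n)
    (X : Fin n → Ω → ℝ) (hmeas : ∀ i, Measurable (X i))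
    (hindep : iIndepFun X P)
    (hdist : ∀ i, Measure.map (X i) P = gaussianReal 0 1) :
    P {ω | Real.sqrt n * PhiInv (1 - γ) < ∑ i, (q + X i ω)} =
        ENNReal.ofReal (1 - Phi (PhiInv (1 - γ) - q * Real.sqrt n)) ∧
      ENNReal.ofReal γ <
        P {ω | Real.sqrt n * PhiInv (1 - γ) < ∑ i, (q + X i ω)} := by
  have hnpos : (0:ℝ) < n := by exact_mod_cast hn
  have hsqpos : (0:ℝ) < Real.sqrt n := Real.sqrt_pos.mpr hnpos
  have hsq : Real.sqrt (n:ℝ) * Real.sqrt (n:ℝ) = (n:ℝ) := Real.mul_self_sqrt hnpos.le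
  set A := PhiInv (1 - γ) with hA
  set x₀ := A - q * Real.sqrt n with hx₀def
  have hS : Measurable (fun ω => ∑ i, X i ω) := Finset.measurable_sum _ fun i _ => hmeas i
  have hmapS : Measure.map (fun ω => ∑ i, X i ω) P = gaussianReal 0 (n : ℝ≥0) := by
    have := map_sum_gauss P X hmeas hindep hdist Finset.univ
    simpa using this
  have hsum : ∀ ω, ∑ i, (q + X i ω) = n * q + ∑ i, X i ω := by
    intro ω
    rw [Finset.sum_add_distrib, Finset.sum_const, Finset.card_univ, Fintype.card_fin,
      nsmul_eq_mul]
  have hset : {ω | Real.sqrt n * A < ∑ i, (q + X i ω)}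
      = (fun ω => ∑ i, X i ω) ⁻¹' Set.Ioi (Real.sqrt n * A - n * q) := by
    ext ω
    simp only [Set.mem_setOf_eq, Set.mem_preimage, Set.mem_Ioi, hsum]
    constructor <;> intro <;> linarith
  have hgauss_scale : gaussianReal 0 (n : ℝ≥0)
      = (gaussianReal 0 1).map (fun x => Real.sqrt n * x) := by
    have h := gaussianReal_map_const_mul (μ := 0) (v := 1) (Real.sqrt n)
    rw [mul_zero] at h
    rw [h]
    congr 1
    ext
    simp only [NNReal.coe_mul, NNReal.coe_mk, NNReal.coe_one, mul_one, NNReal.coe_natCast, sq, hsq]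
  have hpre : (fun x => Real.sqrt n * x) ⁻¹' Set.Ioi (Real.sqrt n * A - n * q)
      = Set.Ioi x₀ := by
    ext x
    simp only [Set.mem_preimage, Set.mem_Ioi, hx₀def]
    have h2 : Real.sqrt n * (A - q * Real.sqrt n) = Real.sqrt n * A - n * q := by
      rw [mul_sub, show Real.sqrt (n:ℝ) * (q * Real.sqrt (n:ℝ))
        = q * (Real.sqrt (n:ℝ) * Real.sqrt (n:ℝ)) by ring, hsq]
      ring
    rw [← h2, mul_lt_mul_iff_right₀ hsqpos]
  have hP : P {ω | Real.sqrt n * A < ∑ i, (q + X i ω)} = gaussianReal 0 1 (Set.Ioi x₀) := by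
    rw [hset, ← Measure.map_apply hS measurableSet_Ioi, hmapS, hgauss_scale,
      Measure.map_apply (measurable_const_mul _) measurableSet_Ioi, hpre]
  have hIic : gaussianReal 0 1 (Set.Iic x₀) ≠ ⊤ := measure_ne_top _ _
  have hIoi : gaussianReal 0 1 (Set.Ioi x₀) = 1 - gaussianReal 0 1 (Set.Iic x₀) := by
    rw [← Set.compl_Iic, measure_compl measurableSet_Iic hIic, measure_univ]
  have heq : gaussianReal 0 1 (Set.Ioi x₀) = ENNReal.ofReal (1 - Phi x₀) := by
    rw [hIoi, Phi, ENNReal.ofReal_sub _ ENNReal.toReal_nonneg, ENNReal.ofReal_one,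
      ENNReal.ofReal_toReal hIic]
  have h1γ : (1 - γ) ∈ Set.Ioo (0:ℝ) 1 := ⟨by linarith [hγ.2], by linarith [hγ.1]⟩
  have hPhiA : Phi A = 1 - γ := phi_phiInv h1γ
  have hlt : Phi x₀ < 1 - γ := by
    rw [← hPhiA]
    exact phi_strictMono (by nlinarith [hq.1, hsqpos])
  refine ⟨by rw [hP, heq], ?_⟩
  rw [hP, heq]
  exact (ENNReal.ofReal_lt_ofReal_iff (by linarith [hγ.1])).mpr (by linarith)
end

section
/- Let γ ∈ (0,1), n ≥ 1, and 0 ≤ q ≤ τ. Let X = (X_1, …, X_n) be a standard Gaussian vector with law N(0, I_n) on a probability space (Ω, P) and let Δ = (Δ_1, …, Δ_n) be a random vector independent of X with |Δ_i| ≤ q almost surely for every i. Then P(|∑_{i=1}^n (Δ_i + X_i)| > √n · λ_γ(τ√n)) ≤ γ. (The RDT decision applied to observations with interference bounded by q ≤ τ has false alarm probability at most γ.) -/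
open MeasureTheory ProbabilityTheory Real Filter
open scoped NNReal ENNReal

lemma conv_real {A B : ℝ} (hA : 0 < A) (hB : 0 < B) (s : ℝ) :
    ∫ x : ℝ, ((Real.sqrt (2*π*A))⁻¹ * rexp (-(x)^2/(2*A))) *
      ((Real.sqrt (2*π*B))⁻¹ * rexp (-(s-x)^2/(2*B)))
    = (Real.sqrt (2*π*(A+B)))⁻¹ * rexp (-(s)^2/(2*(A+B))) := by
  have hpi := Real.pi_pos
  set k : ℝ := (A+B)/(2*A*B) with hk
  have hkpos : 0 < k := by positivity
  set c : ℝ := A*s/(A+B) with hc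
  set K : ℝ := (Real.sqrt (2*π*A))⁻¹ * (Real.sqrt (2*π*B))⁻¹ * rexp (-(s)^2/(2*(A+B))) with hK
  have h1 : ∀ x : ℝ, ((Real.sqrt (2*π*A))⁻¹ * rexp (-(x)^2/(2*A))) *
      ((Real.sqrt (2*π*B))⁻¹ * rexp (-(s-x)^2/(2*B)))
      = K * rexp (-k * (x - c)^2) := by
    intro x
    have hA' : A ≠ 0 := hA.ne'
    have hB' : B ≠ 0 := hB.ne'
    have hAB : A + B ≠ 0 := by positivity
    rw [hK, mul_mul_mul_comm, ← Real.exp_add]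
    rw [show -(x:ℝ)^2/(2*A) + -(s-x)^2/(2*B) = -s^2/(2*(A+B)) + -k*(x-c)^2 from by
      rw [hk, hc]; field_simp; ring]
    rw [Real.exp_add]
    ring
  rw [MeasureTheory.integral_congr_ae (Filter.Eventually.of_forall h1)]
  rw [MeasureTheory.integral_const_mul]
  have h2 : ∫ x : ℝ, rexp (-k * (x - c)^2) = ∫ x : ℝ, rexp (-k * x^2) := by
    exact MeasureTheory.integral_sub_right_eq_self (fun x => rexp (-k * x^2)) c
  rw [h2, integral_gaussian]
  rw [hK]
  have h3 : (Real.sqrt (2*π*A))⁻¹ * (Real.sqrt (2*π*B))⁻¹ * Real.sqrt (π/k)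
      = (Real.sqrt (2*π*(A+B)))⁻¹ := by
    rw [← Real.sqrt_inv, ← Real.sqrt_inv, ← Real.sqrt_mul (by positivity),
      ← Real.sqrt_mul (by positivity), ← Real.sqrt_inv]
    have hA' : A ≠ 0 := hA.ne'
    have hB' : B ≠ 0 := hB.ne'
    have hAB : A + B ≠ 0 := by positivity
    have hπ : π ≠ 0 := hpi.ne'
    congr 1
    rw [hk]
    field_simp
  calc (Real.sqrt (2*π*A))⁻¹ * (Real.sqrt (2*π*B))⁻¹ * rexp (-(s)^2/(2*(A+B))) * Real.sqrt (π/k)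
      = ((Real.sqrt (2*π*A))⁻¹ * (Real.sqrt (2*π*B))⁻¹ * Real.sqrt (π/k)) * rexp (-(s)^2/(2*(A+B))) := by ring
    _ = (Real.sqrt (2*π*(A+B)))⁻¹ * rexp (-(s)^2/(2*(A+B))) := by rw [h3]

lemma pdf_bdd (v : ℝ≥0) (x : ℝ) : gaussianPDFReal 0 v x ≤ (Real.sqrt (2*π*v))⁻¹ := by
  rw [gaussianPDFReal]
  have h1 : rexp (-(x-0)^2/(2*v)) ≤ 1 := by
    rw [Real.exp_le_one_iff, neg_div]
    have : (0:ℝ) ≤ (x-0)^2/(2*v) := by positivity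
    linarith
  have h2 : (0:ℝ) ≤ (Real.sqrt (2*π*v))⁻¹ := by positivity
  calc (Real.sqrt (2*π*v))⁻¹ * rexp (-(x-0)^2/(2*v)) ≤ (Real.sqrt (2*π*v))⁻¹ * 1 := by
        exact mul_le_mul_of_nonneg_left h1 h2
    _ = _ := mul_one _

lemma pdf_conv (a b : ℝ≥0) (ha : a ≠ 0) (hb : b ≠ 0) (s : ℝ) :
    ∫⁻ x : ℝ, gaussianPDF 0 a x * gaussianPDF 0 b (s - x) = gaussianPDF 0 (a+b) s := by
  have hA : (0:ℝ) < a := lt_of_le_of_ne a.coe_nonneg (by exact_mod_cast (Ne.symm ha))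
  have hB : (0:ℝ) < b := lt_of_le_of_ne b.coe_nonneg (by exact_mod_cast (Ne.symm hb))
  have hint : Integrable (fun x => gaussianPDFReal 0 a x * gaussianPDFReal 0 b (s - x)) := by
    have := (integrable_gaussianPDFReal 0 a).bdd_mul
      (f := fun x => gaussianPDFReal 0 b (s - x))
      (((measurable_gaussianPDFReal 0 b).comp (measurable_const.sub measurable_id)).aestronglyMeasurable)
      (c := (Real.sqrt (2*π*b))⁻¹) (Filter.Eventually.of_forall fun x => by
        rw [Real.norm_of_nonneg (gaussianPDFReal_nonneg 0 b _)]; exact pdf_bdd b _)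
    have heq : (fun x => gaussianPDFReal 0 b (s - x) * gaussianPDFReal 0 a x)
        = fun x => gaussianPDFReal 0 a x * gaussianPDFReal 0 b (s - x) := by
      ext x; ring
    rwa [heq] at this
  have hnn : 0 ≤ᶠ[ae volume] fun x => gaussianPDFReal 0 a x * gaussianPDFReal 0 b (s - x) :=
    Filter.Eventually.of_forall fun x =>
      mul_nonneg (gaussianPDFReal_nonneg _ _ _) (gaussianPDFReal_nonneg _ _ _)
  have key : ∫ x : ℝ, gaussianPDFReal 0 a x * gaussianPDFReal 0 b (s - x)
      = gaussianPDFReal 0 (a+b) s := by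
    have := conv_real hA hB s
    simp only [gaussianPDFReal, sub_zero] at *
    rw [show ((a+b : ℝ≥0) : ℝ) = (a:ℝ) + (b:ℝ) by push_cast; ring]
    exact this
  calc ∫⁻ x : ℝ, gaussianPDF 0 a x * gaussianPDF 0 b (s - x)
      = ∫⁻ x : ℝ, ENNReal.ofReal (gaussianPDFReal 0 a x * gaussianPDFReal 0 b (s - x)) := by
        congr 1; ext x
        rw [gaussianPDF, gaussianPDF, ENNReal.ofReal_mul (gaussianPDFReal_nonneg _ _ _)]
    _ = ENNReal.ofReal (∫ x : ℝ, gaussianPDFReal 0 a x * gaussianPDFReal 0 b (s - x)) :=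
        (ofReal_integral_eq_lintegral_ofReal hint hnn).symm
    _ = gaussianPDF 0 (a+b) s := by rw [key]; rfl

lemma gaussian_conv (a b : ℝ≥0) (ha : a ≠ 0) (hb : b ≠ 0) :
    Measure.map (fun p : ℝ × ℝ => p.1 + p.2) ((gaussianReal 0 a).prod (gaussianReal 0 b))
      = gaussianReal 0 (a+b) := by
  have hab : a + b ≠ 0 := by simp [ha]
  refine Measure.ext_of_Iic _ _ (fun t => ?_)
  rw [Measure.map_apply measurable_add measurableSet_Iic]
  have hset : MeasurableSet ((fun p : ℝ × ℝ => p.1 + p.2) ⁻¹' Set.Iic t) :=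
    measurable_add measurableSet_Iic
  rw [Measure.prod_apply hset]
  have hpre : ∀ x : ℝ, (Prod.mk x ⁻¹' ((fun p : ℝ × ℝ => p.1 + p.2) ⁻¹' Set.Iic t))
      = Set.Iic (t - x) := by
    intro x; ext y
    simp [Set.mem_Iic, add_comm]
    constructor <;> intro h <;> linarith
  simp_rw [hpre]
  have hslice : ∀ x : ℝ, gaussianReal 0 b (Set.Iic (t - x))
      = ∫⁻ s in Set.Iic t, gaussianPDF 0 b (s - x) := by
    intro x
    rw [gaussianReal_of_var_ne_zero 0 hb, withDensity_apply _ measurableSet_Iic]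
    have hmap : (volume : Measure ℝ) = Measure.map (fun y => y + x) volume :=
      (map_add_right_eq_self volume x).symm
    have h2 : ∫⁻ s in Set.Iic t, gaussianPDF 0 b (s - x) ∂volume
        = ∫⁻ y in Set.Iic (t - x), gaussianPDF 0 b y := by
      conv_lhs => rw [hmap]
      rw [setLIntegral_map (f := fun s : ℝ => gaussianPDF 0 b (s - x))
        (g := fun y : ℝ => y + x) measurableSet_Iic
        ((measurable_gaussianPDF 0 b).comp (measurable_id.sub measurable_const))
        (measurable_id.add measurable_const)]
      rw [show (fun y : ℝ => y + x) ⁻¹' Set.Iic t = Set.Iic (t-x) from by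
        ext y; simp only [Set.mem_preimage, Set.mem_Iic]; constructor <;> intro h <;> linarith]
      simp only [add_sub_cancel_right]
    exact h2.symm
  simp_rw [hslice]
  have m1 : Measurable fun x : ℝ => ∫⁻ s in Set.Iic t, gaussianPDF 0 b (s - x) := by
    apply Measurable.lintegral_prod_right
    exact (measurable_gaussianPDF 0 b).comp (measurable_snd.sub measurable_fst)
  rw [gaussianReal_of_var_ne_zero 0 ha,
    lintegral_withDensity_eq_lintegral_mul volume (measurable_gaussianPDF 0 a) m1]
  simp only [Pi.mul_apply]
  have h3 : ∀ x : ℝ, gaussianPDF 0 a x * ∫⁻ s in Set.Iic t, gaussianPDF 0 b (s - x)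
      = ∫⁻ s in Set.Iic t, gaussianPDF 0 a x * gaussianPDF 0 b (s - x) := fun x =>
    (lintegral_const_mul _ ((measurable_gaussianPDF 0 b).comp
      (measurable_id.sub measurable_const))).symm
  simp_rw [h3]
  rw [lintegral_lintegral_swap]
  · simp_rw [pdf_conv a b ha hb]
    rw [gaussianReal_of_var_ne_zero 0 hab, withDensity_apply _ measurableSet_Iic]
  · apply Measurable.aemeasurable
    exact ((measurable_gaussianPDF 0 a).comp measurable_fst).mul
      ((measurable_gaussianPDF 0 b).comp (measurable_snd.sub measurable_fst))

lemma sum_gaussian {Ω : Type*} [MeasurableSpace Ω] (P : Measure Ω) [IsProbabilityMeasure P]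
    {n : ℕ} (X : Fin n → Ω → ℝ) (hmeas : ∀ i, Measurable (X i))
    (hindep : iIndepFun X P)
    (hdist : ∀ i, Measure.map (X i) P = gaussianReal 0 1) :
    ∀ s : Finset (Fin n), s.Nonempty →
      Measure.map (fun ω => ∑ i ∈ s, X i ω) P = gaussianReal 0 (s.card : ℝ≥0) := by
  intro s
  induction s using Finset.cons_induction with
  | empty => intro h; exact absurd h (by simp)
  | cons i s hi ih =>
    intro _
    rcases s.eq_empty_or_nonempty with rfl | hs
    · simp only [Finset.cons_empty, Finset.sum_singleton, Finset.card_singleton]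
      exact_mod_cast hdist i
    · have hf : Measurable fun ω => ∑ j ∈ s, X j ω := by
        exact Finset.measurable_sum s (fun j _ => hmeas j)
      have hg : Measurable (X i) := hmeas i
      have hInd : IndepFun (fun ω => ∑ j ∈ s, X j ω) (X i) P := by
        have := hindep.indepFun_finsetSum_of_notMem hmeas hi
        have he : (∑ j ∈ s, X j) = fun ω => ∑ j ∈ s, X j ω := by
          ext ω; simp [Finset.sum_apply]
        rwa [he] at this
      have hprod : Measure.map (fun ω => (∑ j ∈ s, X j ω, X i ω)) P
          = (Measure.map (fun ω => ∑ j ∈ s, X j ω) P).prod (Measure.map (X i) P) :=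
        (indepFun_iff_map_prod_eq_prod_map_map hf.aemeasurable hg.aemeasurable).mp hInd
      have hcomp : Measure.map (fun ω => ∑ j ∈ Finset.cons i s hi, X j ω) P
          = Measure.map (fun p : ℝ × ℝ => p.1 + p.2)
              (Measure.map (fun ω => (∑ j ∈ s, X j ω, X i ω)) P) := by
        rw [Measure.map_map measurable_add (hf.prodMk hg)]
        congr 1
        ext ω
        rw [Finset.sum_cons]; simp [Function.comp]; ring
      rw [hcomp, hprod, ih hs, hdist i,
        gaussian_conv _ _ (by exact_mod_cast Finset.card_ne_zero.mpr hs) one_ne_zero]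
      congr 1
      rw [Finset.card_cons]
      push_cast
      ring

lemma g01_Iic (x : ℝ) : gaussianReal 0 1 (Set.Iic x) = ENNReal.ofReal (Phi x) :=
  (ENNReal.ofReal_toReal (measure_ne_top _ _)).symm

lemma Phi_nonneg (x : ℝ) : 0 ≤ Phi x := ENNReal.toReal_nonneg

lemma Phi_le_one (x : ℝ) : Phi x ≤ 1 := by
  rw [Phi]
  have h : gaussianReal 0 1 (Set.Iic x) ≤ 1 := prob_le_one
  calc ((gaussianReal 0 1) (Set.Iic x)).toReal ≤ (1 : ℝ≥0∞).toReal :=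
    ENNReal.toReal_mono (by simp) h
  _ = 1 := by simp

lemma Phi_mono {x y : ℝ} (h : x ≤ y) : Phi x ≤ Phi y :=
  ENNReal.toReal_mono (measure_ne_top _ _) (measure_mono (Set.Iic_subset_Iic.mpr h))

lemma g01_singleton (x : ℝ) : gaussianReal 0 1 {x} = 0 :=
  gaussianReal_absolutelyContinuous 0 one_ne_zero (volume_singleton)

lemma g01_Iio (x : ℝ) : gaussianReal 0 1 (Set.Iio x) = ENNReal.ofReal (Phi x) := by
  rw [← g01_Iic]
  refine le_antisymm (measure_mono Set.Iio_subset_Iic_self) ?_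
  calc gaussianReal 0 1 (Set.Iic x) = gaussianReal 0 1 (Set.Iio x ∪ {x}) := by
        rw [Set.Iio_union_right]
    _ ≤ gaussianReal 0 1 (Set.Iio x) + gaussianReal 0 1 {x} := measure_union_le _ _
    _ = gaussianReal 0 1 (Set.Iio x) := by rw [g01_singleton, add_zero]

lemma g01_Ioi (x : ℝ) : gaussianReal 0 1 (Set.Ioi x) = ENNReal.ofReal (1 - Phi x) := by
  have h := measure_compl (μ := gaussianReal 0 1) (s := Set.Iic x) measurableSet_Iic (measure_ne_top _ _)
  rw [Set.compl_Iic] at h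
  rw [h, measure_univ, g01_Iic, ← ENNReal.ofReal_one,
    ← ENNReal.ofReal_sub _ (Phi_nonneg x)]

lemma g01_map_neg : Measure.map (fun z : ℝ => -z) (gaussianReal 0 1) = gaussianReal 0 1 := by
  have h := gaussianReal_map_const_mul (μ := 0) (v := 1) (-1)
  simp only [neg_mul, one_mul, mul_zero, neg_zero] at h
  rw [h]
  congr 1
  ext
  push_cast
  norm_num

lemma Phi_neg (x : ℝ) : Phi (-x) = 1 - Phi x := by
  have h1 : gaussianReal 0 1 (Set.Iic (-x)) = gaussianReal 0 1 (Set.Ici x) := by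
    conv_lhs => rw [← g01_map_neg]
    rw [Measure.map_apply measurable_neg measurableSet_Iic]
    congr 1
    ext z
    simp only [Set.mem_preimage, Set.mem_Iic, Set.mem_Ici]
    constructor <;> intro h <;> linarith
  have h2 : gaussianReal 0 1 (Set.Ici x) = gaussianReal 0 1 (Set.Ioi x) := by
    refine le_antisymm ?_ (measure_mono Set.Ioi_subset_Ici_self)
    calc gaussianReal 0 1 (Set.Ici x) = gaussianReal 0 1 ({x} ∪ Set.Ioi x) := by
          congr 1; ext z
          simp only [Set.mem_union, Set.mem_singleton_iff, Set.mem_Ici, Set.mem_Ioi,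
            le_iff_eq_or_lt, eq_comm]
      _ ≤ gaussianReal 0 1 {x} + gaussianReal 0 1 (Set.Ioi x) := measure_union_le _ _
      _ = gaussianReal 0 1 (Set.Ioi x) := by rw [g01_singleton, zero_add]
  have := h1.trans (h2.trans (g01_Ioi x))
  rw [g01_Iic] at this
  have h3 : 0 ≤ 1 - Phi x := by linarith [Phi_le_one x]
  exact (ENNReal.ofReal_eq_ofReal_iff (Phi_nonneg _) h3).mp this

lemma continuous_pdf : Continuous (gaussianPDFReal 0 1) := by
  unfold gaussianPDFReal
  fun_prop

lemma Phi_diff {s t : ℝ} (h : s ≤ t) :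
    Phi t - Phi s = ∫ x in s..t, gaussianPDFReal 0 1 x := by
  have h1 : gaussianReal 0 1 (Set.Ioc s t)
      = ENNReal.ofReal (∫ x in Set.Ioc s t, gaussianPDFReal 0 1 x) :=
    gaussianReal_apply_eq_integral 0 one_ne_zero _
  have h2 : gaussianReal 0 1 (Set.Ioc s t)
      = gaussianReal 0 1 (Set.Iic t) - gaussianReal 0 1 (Set.Iic s) := by
    rw [← Set.Iic_sdiff_Iic]
    exact measure_diff (Set.Iic_subset_Iic.mpr h) measurableSet_Iic.nullMeasurableSet
      (measure_ne_top _ _)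
  rw [g01_Iic, g01_Iic, ← ENNReal.ofReal_sub _ (Phi_nonneg s)] at h2
  have h3 : (0:ℝ) ≤ ∫ x in Set.Ioc s t, gaussianPDFReal 0 1 x :=
    setIntegral_nonneg measurableSet_Ioc (fun x _ => gaussianPDFReal_nonneg 0 1 x)
  have h4 : Phi t - Phi s = ∫ x in Set.Ioc s t, gaussianPDFReal 0 1 x := by
    have := h1.symm.trans h2
    have h5 : 0 ≤ Phi t - Phi s := by linarith [Phi_mono h]
    exact ((ENNReal.ofReal_eq_ofReal_iff h3 h5).mp this).symm
  rw [h4, intervalIntegral.integral_of_le h]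

lemma pdf_pt_le {lam u : ℝ} (hlam : 0 ≤ lam) (hu : 0 ≤ u) :
    gaussianPDFReal 0 1 (lam + u) ≤ gaussianPDFReal 0 1 (lam - u) := by
  unfold gaussianPDFReal
  apply mul_le_mul_of_nonneg_left _ (by positivity)
  apply Real.exp_le_exp.mpr
  push_cast
  rw [div_le_div_iff_of_pos_right (by norm_num)]
  nlinarith

lemma phi_sum_mono_aux {lam b A : ℝ} (hlam : 0 ≤ lam) (hb : 0 ≤ b) (hbA : b ≤ A) :
    Phi (lam + A) - Phi (lam + b) ≤ Phi (lam - b) - Phi (lam - A) := by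
  rw [Phi_diff (by linarith), Phi_diff (by linarith)]
  rw [show ∫ x in (lam + b)..(lam + A), gaussianPDFReal 0 1 x
      = ∫ u in b..A, gaussianPDFReal 0 1 (lam + u) from
    (intervalIntegral.integral_comp_add_left (gaussianPDFReal 0 1) lam).symm]
  rw [show ∫ x in (lam - A)..(lam - b), gaussianPDFReal 0 1 x
      = ∫ u in b..A, gaussianPDFReal 0 1 (lam - u) from
    (intervalIntegral.integral_comp_sub_left (gaussianPDFReal 0 1) lam).symm]
  apply intervalIntegral.integral_mono_on hbA
  · exact (continuous_pdf.comp (continuous_const.add continuous_id)).intervalIntegrable _ _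
  · exact (continuous_pdf.comp (continuous_const.sub continuous_id)).intervalIntegrable _ _
  · intro u hu
    exact pdf_pt_le hlam (le_trans hb hu.1)

lemma phi_sum_mono {lam a A : ℝ} (hlam : 0 ≤ lam) (h : |a| ≤ A) :
    Phi (lam - A) + Phi (lam + A) ≤ Phi (lam - a) + Phi (lam + a) := by
  have hsym : Phi (lam - a) + Phi (lam + a) = Phi (lam - |a|) + Phi (lam + |a|) := by
    rcases abs_cases a with ⟨h1, _⟩ | ⟨h1, _⟩
    · rw [h1]
    · rw [h1]; ring_nf
  rw [hsym]
  have := phi_sum_mono_aux hlam (abs_nonneg a) h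
  linarith

lemma std_tail {lam a : ℝ} (hlam : 0 ≤ lam) :
    gaussianReal 0 1 {z : ℝ | lam < |a + z|}
      = ENNReal.ofReal (2 - Phi (lam - a) - Phi (lam + a)) := by
  have hset : {z : ℝ | lam < |a + z|} = Set.Iio (-lam - a) ∪ Set.Ioi (lam - a) := by
    ext z
    simp only [Set.mem_setOf_eq, Set.mem_union, Set.mem_Iio, Set.mem_Ioi, lt_abs]
    constructor
    · rintro (h | h)
      · right; linarith
      · left; linarith
    · rintro (h | h)
      · right; linarith
      · left; linarith
  have hdisj : Disjoint (Set.Iio (-lam - a)) (Set.Ioi (lam - a)) := by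
    rw [Set.disjoint_left]
    intro z h1 h2
    simp only [Set.mem_Iio, Set.mem_Ioi] at h1 h2
    linarith
  rw [hset, measure_union hdisj measurableSet_Ioi, g01_Iio, g01_Ioi,
    ← ENNReal.ofReal_add (Phi_nonneg _) (by linarith [Phi_le_one (lam - a)])]
  congr 1
  have := Phi_neg (lam + a)
  rw [show -lam - a = -(lam + a) by ring] at *
  rw [this]
  ring

lemma lam_nonneg {lam A γ : ℝ} (hA : 0 ≤ A) (hγ : γ < 1)
    (hlam : 2 - Phi (lam - A) - Phi (lam + A) = γ) : 0 ≤ lam := by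
  by_contra h
  push_neg at h
  have h1 : Phi (lam - A) ≤ Phi (-(lam + A)) := Phi_mono (by linarith)
  rw [Phi_neg] at h1
  linarith

lemma var_tail {n : ℕ} (hn : 1 ≤ n) {lam τ γ d : ℝ} (hγ1 : γ < 1) (hτ : 0 ≤ τ)
    (hlam : 2 - Phi (lam - τ * Real.sqrt n) - Phi (lam + τ * Real.sqrt n) = γ)
    (hd : |d| ≤ τ * n) :
    gaussianReal 0 (n : ℝ≥0) {s : ℝ | Real.sqrt n * lam < |d + s|} ≤ ENNReal.ofReal γ := by
  have hn0 : (0:ℝ) < n := by exact_mod_cast hn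
  have hsn : (0:ℝ) < Real.sqrt n := Real.sqrt_pos.mpr hn0
  have hA : (0:ℝ) ≤ τ * Real.sqrt n := by positivity
  have hlam0 : 0 ≤ lam := lam_nonneg hA hγ1 hlam
  set a : ℝ := d / Real.sqrt n with ha
  have hmapg : gaussianReal 0 (n : ℝ≥0)
      = Measure.map (fun z : ℝ => Real.sqrt n * z) (gaussianReal 0 1) := by
    rw [gaussianReal_map_const_mul (Real.sqrt n)]
    congr 1
    · ring
    · ext
      push_cast
      rw [Real.sq_sqrt hn0.le]
      ring
  have hmset : MeasurableSet {s : ℝ | Real.sqrt n * lam < |d + s|} :=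
    measurableSet_lt measurable_const ((measurable_const.add measurable_id).abs)
  rw [hmapg, Measure.map_apply (measurable_const_mul _) hmset]
  have hpre : (fun z : ℝ => Real.sqrt n * z) ⁻¹' {s : ℝ | Real.sqrt n * lam < |d + s|}
      = {z : ℝ | lam < |a + z|} := by
    ext z
    simp only [Set.mem_preimage, Set.mem_setOf_eq]
    have he : d + Real.sqrt n * z = Real.sqrt n * (a + z) := by
      rw [ha]; field_simp
    rw [he, abs_mul, abs_of_pos hsn, mul_lt_mul_iff_right₀ hsn]
  rw [hpre, std_tail hlam0]
  apply ENNReal.ofReal_le_ofReal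
  have haA : |a| ≤ τ * Real.sqrt n := by
    rw [ha, abs_div, abs_of_pos hsn, div_le_iff₀ hsn]
    calc |d| ≤ τ * n := hd
      _ = τ * Real.sqrt n * Real.sqrt n := by
          rw [mul_assoc, Real.mul_self_sqrt hn0.le]
  have := phi_sum_mono hlam0 haA
  linarith

/-- the RDT decision applied to observations with interference bounded by
q ≤ τ has false alarm probability at most γ. -/
theorem stmt9 {Ω : Type*} [MeasurableSpace Ω] (P : Measure Ω) [IsProbabilityMeasure P]
    (γ q τ : ℝ) (hγ : γ ∈ Set.Ioo (0 : ℝ) 1) (hq : 0 ≤ q) (hqτ : q ≤ τ)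
    (n : ℕ) (hn : 1 ≤ n)
    (X : Fin n → Ω → ℝ) (hmeas : ∀ i, Measurable (X i))
    (hindep : iIndepFun X P)
    (hdist : ∀ i, Measure.map (X i) P = gaussianReal 0 1)
    (Δ : Ω → Fin n → ℝ) (hΔmeas : Measurable Δ)
    (hΔX : IndepFun Δ (fun ω i => X i ω) P)
    (hΔbnd : ∀ i, ∀ᵐ ω ∂P, |Δ ω i| ≤ q)
    (lam : ℝ)
    (hlam : 2 - Phi (lam - τ * Real.sqrt n) - Phi (lam + τ * Real.sqrt n) = γ) :
    P {ω | Real.sqrt n * lam < |∑ i, (Δ ω i + X i ω)|} ≤ ENNReal.ofReal γ := by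
  have hτ : 0 ≤ τ := le_trans hq hqτ
  set D : Ω → ℝ := fun ω => ∑ i, Δ ω i with hD
  set S : Ω → ℝ := fun ω => ∑ i, X i ω with hS
  have hDmeas : Measurable D := by
    apply Finset.measurable_sum
    exact fun i _ => (measurable_pi_apply i).comp hΔmeas
  have hSmeas : Measurable S := Finset.measurable_sum _ (fun i _ => hmeas i)
  have hne : (Finset.univ : Finset (Fin n)).Nonempty := by
    refine ⟨⟨0, hn⟩, Finset.mem_univ _⟩
  have hSlaw : Measure.map S P = gaussianReal 0 (n : ℝ≥0) := by
    have := sum_gaussian P X hmeas hindep hdist Finset.univ hne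
    rwa [Finset.card_univ, Fintype.card_fin] at this
  have hDS : IndepFun D S P := by
    have := hΔX.comp (φ := fun d : Fin n → ℝ => ∑ i, d i) (ψ := fun d : Fin n → ℝ => ∑ i, d i)
      (Finset.measurable_sum _ (fun i _ => measurable_pi_apply i))
      (Finset.measurable_sum _ (fun i _ => measurable_pi_apply i))
    exact this
  have hpair : Measure.map (fun ω => (D ω, S ω)) P = (Measure.map D P).prod (Measure.map S P) :=
    (indepFun_iff_map_prod_eq_prod_map_map hDmeas.aemeasurable hSmeas.aemeasurable).mp hDS
  have hEset : MeasurableSet {p : ℝ × ℝ | Real.sqrt n * lam < |p.1 + p.2|} :=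
    measurableSet_lt measurable_const (measurable_fst.add measurable_snd).abs
  have hevent : {ω | Real.sqrt n * lam < |∑ i, (Δ ω i + X i ω)|}
      = (fun ω => (D ω, S ω)) ⁻¹' {p : ℝ × ℝ | Real.sqrt n * lam < |p.1 + p.2|} := by
    ext ω
    simp only [Set.mem_setOf_eq, Set.mem_preimage, hD, hS]
    rw [Finset.sum_add_distrib]
  rw [hevent, ← Measure.map_apply (hDmeas.prodMk hSmeas) hEset, hpair,
    Measure.prod_apply hEset]
  have hpre : ∀ d : ℝ, Prod.mk d ⁻¹' {p : ℝ × ℝ | Real.sqrt n * lam < |p.1 + p.2|}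
      = {s : ℝ | Real.sqrt n * lam < |d + s|} := by
    intro d; ext s; simp
  simp_rw [hpre, hSlaw]
  have haeD : ∀ᵐ ω ∂P, |D ω| ≤ q * n := by
    have h1 : ∀ᵐ ω ∂P, ∀ i, |Δ ω i| ≤ q := ae_all_iff.mpr hΔbnd
    filter_upwards [h1] with ω hω
    calc |D ω| ≤ ∑ i, |Δ ω i| := Finset.abs_sum_le_sum_abs _ _
      _ ≤ ∑ _i : Fin n, q := Finset.sum_le_sum (fun i _ => hω i)
      _ = q * n := by rw [Finset.sum_const, Finset.card_univ, Fintype.card_fin,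
            nsmul_eq_mul]; ring
  have haemap : ∀ᵐ d ∂(Measure.map D P), |d| ≤ q * n := by
    rw [ae_map_iff hDmeas.aemeasurable]
    · exact haeD
    · exact measurableSet_le (measurable_id.abs) measurable_const
  have hbound : ∀ᵐ d ∂(Measure.map D P),
      gaussianReal 0 (n : ℝ≥0) {s : ℝ | Real.sqrt n * lam < |d + s|} ≤ ENNReal.ofReal γ := by
    filter_upwards [haemap] with d hd
    refine var_tail hn hγ.2 hτ hlam ?_
    calc |d| ≤ q * n := hd
      _ ≤ τ * n := by
        apply mul_le_mul_of_nonneg_right hqτ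
        positivity
  calc ∫⁻ d, gaussianReal 0 (n : ℝ≥0) {s : ℝ | Real.sqrt n * lam < |d + s|} ∂(Measure.map D P)
      ≤ ∫⁻ _d, ENNReal.ofReal γ ∂(Measure.map D P) := lintegral_mono_ae hbound
    _ = ENNReal.ofReal γ := by
        have : IsProbabilityMeasure (Measure.map D P) :=
          Measure.isProbabilityMeasure_map hDmeas.aemeasurable
        rw [lintegral_const, measure_univ, mul_one]
end

section
/- Let γ ∈ (0,1), q ∈ [0, 1/2), and τ ∈ [0, 1/2). Let (X_n)_{n ∈ ℕ} be a sequence of independent standard normal random variables on a probability space (Ω, P) and let (Δ_n)_{n ∈ ℕ} be random variables with |Δ_n| ≤ q almost surely for every n and such that, for every n, the vector (Δ_1, …, Δ_n) is independent of (X_1, …, X_n). Then lim_{n → ∞} P(|∑_{i=1}^n (1 + Δ_i + X_i)| > √n · λ_γ(τ√n)) = 1. (The detection probabilities of the RDT decisions tend to 1 as the number of observations grows; hence a decision dominating all RDT decisions in detection probability is an oracle.) -/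
open MeasureTheory ProbabilityTheory Real Filter

lemma stdGaussPDF (x : ℝ) :
    gaussianPDFReal 0 1 x = (Real.sqrt (2 * π))⁻¹ * Real.exp (-x ^ 2 / 2) := by
  simp [gaussianPDFReal]

lemma gauss_withDensity :
    gaussianReal 0 1 =
      volume.withDensity (fun x => ((gaussianPDFReal 0 1 x).toNNReal : ENNReal)) := by
  rw [gaussianReal_of_var_ne_zero _ one_ne_zero]; rfl

lemma integrable_pdf_mul_sq :
    Integrable (fun x : ℝ => gaussianPDFReal 0 1 x * x ^ 2) := by
  have h := integrable_rpow_mul_exp_neg_mul_sq (b := (1/2 : ℝ)) one_half_pos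
    (s := 2) (by norm_num)
  refine (h.const_mul ((Real.sqrt (2 * π))⁻¹)).congr ?_
  filter_upwards with x
  rw [stdGaussPDF, Real.rpow_two]
  ring_nf

lemma gauss_memLp2 : MemLp (id : ℝ → ℝ) 2 (gaussianReal 0 1) := by
  rw [memLp_two_iff_integrable_sq aestronglyMeasurable_id, gauss_withDensity,
    integrable_withDensity_iff_integrable_smul (measurable_gaussianPDFReal 0 1).real_toNNReal]
  refine integrable_pdf_mul_sq.congr ?_
  filter_upwards with x
  simp [NNReal.smul_def, Real.coe_toNNReal _ (gaussianPDFReal_nonneg 0 1 x)]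

lemma integral_mul_exp_odd : ∫ x : ℝ, x * Real.exp (-x ^ 2 / 2) = 0 := by
  have h := integral_neg_eq_self (fun x : ℝ => x * Real.exp (-x ^ 2 / 2)) volume
  simp only [neg_sq, neg_mul] at h
  rw [integral_neg] at h
  linarith

lemma gauss_integral_id : ∫ x, x ∂(gaussianReal 0 1) = 0 := by
  rw [gauss_withDensity,
    integral_withDensity_eq_integral_smul (measurable_gaussianPDFReal 0 1).real_toNNReal]
  have : ∀ x : ℝ, (gaussianPDFReal 0 1 x).toNNReal • x
      = (Real.sqrt (2 * π))⁻¹ * (x * Real.exp (-x ^ 2 / 2)) := by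
    intro x
    rw [NNReal.smul_def, Real.coe_toNNReal _ (gaussianPDFReal_nonneg 0 1 x), stdGaussPDF,
      smul_eq_mul]
    ring
  simp_rw [this]
  rw [integral_const_mul, integral_mul_exp_odd, mul_zero]

/-- the detection probabilities of the RDT decisions tend to 1 as the
number of observations grows. -/
theorem stmt13 {Ω : Type*} [MeasurableSpace Ω] (P : Measure Ω) [IsProbabilityMeasure P]
    (γ q τ : ℝ) (hγ : γ ∈ Set.Ioo (0 : ℝ) 1)
    (hq : q ∈ Set.Ico (0 : ℝ) (1/2)) (hτ : τ ∈ Set.Ico (0 : ℝ) (1/2))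
    (X : ℕ → Ω → ℝ) (hmeas : ∀ i, Measurable (X i))
    (hindep : iIndepFun X P)
    (hdist : ∀ i, Measure.map (X i) P = gaussianReal 0 1)
    (Δ : ℕ → Ω → ℝ) (hΔmeas : ∀ i, Measurable (Δ i))
    (hΔbnd : ∀ i, ∀ᵐ ω ∂P, |Δ i ω| ≤ q)
    (hΔX : ∀ n : ℕ,
      IndepFun (fun ω (i : Fin n) => Δ i ω) (fun ω (i : Fin n) => X i ω) P)
    (lam : ℝ → ℝ)
    (hlam : ∀ a : ℝ, 0 ≤ a → 2 - Phi (lam a - a) - Phi (lam a + a) = γ) :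
    Filter.Tendsto
      (fun n : ℕ =>
        P {ω | Real.sqrt n * lam (τ * Real.sqrt n) <
          |∑ i ∈ Finset.range n, (1 + Δ i ω + X i ω)|})
      Filter.atTop (nhds 1) := by
  obtain ⟨hγ0, hγ1⟩ := hγ
  obtain ⟨hq0, hq1⟩ := hq
  obtain ⟨hτ0, hτ1⟩ := hτ
  -- properties of Phi
  have hPhi_mono : Monotone Phi := fun a b hab =>
    ENNReal.toReal_mono (measure_ne_top _ _) (measure_mono (Set.Iic_subset_Iic.2 hab))
  have hPhi_lim : Tendsto Phi atTop (nhds 1) := by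
    have h := tendsto_measure_Iic_atTop (gaussianReal 0 1)
    rw [measure_univ] at h
    have := (ENNReal.tendsto_toReal ENNReal.one_ne_top).comp h
    simp only [ENNReal.toReal_one] at this
    exact this
  obtain ⟨c, hc⟩ : ∃ c, 1 - γ / 2 < Phi c :=
    (hPhi_lim.eventually (eventually_gt_nhds (by linarith : 1 - γ / 2 < 1))).exists
  have hlam_le : ∀ a : ℝ, 0 ≤ a → lam a ≤ a + c := by
    intro a ha
    by_contra h
    push_neg at h
    have h2 := hPhi_mono (show c ≤ lam a - a by linarith)
    have h3 : Phi (lam a - a) ≤ Phi (lam a + a) := hPhi_mono (by linarith)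
    have h4 := hlam a ha
    linarith
  -- moments of the X i
  have hXae : ∀ i, AEMeasurable (X i) P := fun i => (hmeas i).aemeasurable
  have hL2 : ∀ i, MemLp (X i) 2 P := by
    intro i
    have h : MemLp (id : ℝ → ℝ) 2 (Measure.map (X i) P) := by
      rw [hdist i]; exact gauss_memLp2
    have := (memLp_map_measure_iff aestronglyMeasurable_id (hXae i)).1 h
    simpa [Function.comp] using this
  have hmean : ∀ i, ∫ ω, X i ω ∂P = 0 := by
    intro i
    have h : ∫ x, x ∂(Measure.map (X i) P) = ∫ ω, X i ω ∂P :=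
      integral_map (hXae i) aestronglyMeasurable_id
    rw [← h, hdist i, gauss_integral_id]
  have hident : ∀ i, IdentDistrib (X i) (X 0) P P := fun i =>
    ⟨hXae i, hXae 0, by rw [hdist i, hdist 0]⟩
  set v := variance (X 0) P with hv
  have hvar : ∀ n : ℕ, variance (fun ω => ∑ i ∈ Finset.range n, X i ω) P = n * v := by
    intro n
    have hfun : (fun ω => ∑ i ∈ Finset.range n, X i ω) = ∑ i ∈ Finset.range n, X i := by
      funext ω; simp
    rw [hfun, IndepFun.variance_sum (fun i _ => hL2 i)
      (fun i _ j _ hij => hindep.indepFun hij)]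
    rw [Finset.sum_congr rfl (fun i _ => (hident i).variance_eq)]
    simp [mul_comm, hv]
  -- epsilon
  set ε := 1 - q - τ with hε
  have hε0 : 0 < ε := by simp only [hε]; linarith
  -- measurability of target sets
  have hSmeas : ∀ n : ℕ, Measurable fun ω => ∑ i ∈ Finset.range n, (1 + Δ i ω + X i ω) :=
    fun n => Finset.measurable_sum _ fun i _ => (measurable_const.add (hΔmeas i)).add (hmeas i)
  have hAmeas : ∀ n : ℕ, MeasurableSet {ω | Real.sqrt n * lam (τ * Real.sqrt n) <
      |∑ i ∈ Finset.range n, (1 + Δ i ω + X i ω)|} :=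
    fun n => measurableSet_lt measurable_const (hSmeas n).abs
  -- the key eventual bound
  have hae : ∀ᵐ ω ∂P, ∀ i, |Δ i ω| ≤ q := ae_all_iff.2 hΔbnd
  have key : ∀ᶠ n : ℕ in atTop,
      P ({ω | Real.sqrt n * lam (τ * Real.sqrt n) <
        |∑ i ∈ Finset.range n, (1 + Δ i ω + X i ω)|}ᶜ)
      ≤ ENNReal.ofReal ((4 * v / ε ^ 2) / n) := by
    have hsq : Tendsto (fun n : ℕ => Real.sqrt n) atTop atTop := by
      have h1 : Tendsto (fun x : ℝ => x ^ (1/2 : ℝ)) atTop atTop :=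
        tendsto_rpow_atTop (by norm_num)
      have h2 := h1.comp (tendsto_natCast_atTop_atTop (R := ℝ))
      refine h2.congr fun n => ?_
      rw [Function.comp_apply, ← Real.sqrt_eq_rpow]
    have hev : ∀ᶠ n : ℕ in atTop, c ≤ ε / 2 * Real.sqrt n := by
      have := (hsq.const_mul_atTop (by linarith : (0:ℝ) < ε / 2)).eventually_ge_atTop c
      exact this
    filter_upwards [hev, eventually_ge_atTop 1] with n hn1 hn2
    have hn0 : (0:ℝ) < n := by exact_mod_cast hn2
    -- notation
    set t : ℝ := Real.sqrt n * lam (τ * Real.sqrt n) with ht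
    set Y : Ω → ℝ := fun ω => ∑ i ∈ Finset.range n, X i ω with hY
    have hYfun : Y = ∑ i ∈ Finset.range n, X i := by
      funext ω; simp [hY]
    have hYL2 : MemLp Y 2 P := by
      rw [hYfun]; exact memLp_finset_sum' (Finset.range n) (fun i _ => hL2 i)
    have hYmean : ∫ ω, Y ω ∂P = 0 := by
      rw [hY]
      rw [integral_finset_sum _ (fun i _ => (hL2 i).integrable one_le_two)]
      simp [hmean]
    have hcpos : (0:ℝ) < ε / 2 * n := by positivity
    have cheb := meas_ge_le_variance_div_sq hYL2 hcpos
    rw [hYmean] at cheb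
    -- bound t
    have hsqrtnn : (0:ℝ) ≤ Real.sqrt n := Real.sqrt_nonneg _
    have htle : t ≤ τ * n + c * Real.sqrt n := by
      have h1 : lam (τ * Real.sqrt n) ≤ τ * Real.sqrt n + c :=
        hlam_le _ (by positivity)
      have h2 : Real.sqrt n * Real.sqrt n = (n:ℝ) :=
        Real.mul_self_sqrt (Nat.cast_nonneg n)
      calc t ≤ Real.sqrt n * (τ * Real.sqrt n + c) := by
              rw [ht]; exact mul_le_mul_of_nonneg_left h1 hsqrtnn
        _ = τ * (Real.sqrt n * Real.sqrt n) + c * Real.sqrt n := by ring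
        _ = τ * n + c * Real.sqrt n := by rw [h2]
    -- a.e. inclusion into Chebyshev event
    have hsub : P ({ω | t < |∑ i ∈ Finset.range n, (1 + Δ i ω + X i ω)|}ᶜ)
        ≤ P {ω | ε / 2 * n ≤ |Y ω - 0|} := by
      refine measure_mono_ae ?_
      filter_upwards [hae] with ω hω hmem
      replace hmem : |∑ i ∈ Finset.range n, (1 + Δ i ω + X i ω)| ≤ t := not_lt.1 hmem
      have hsum : ∑ i ∈ Finset.range n, (1 + Δ i ω + X i ω)
          = (n:ℝ) + (∑ i ∈ Finset.range n, Δ i ω) + Y ω := by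
        rw [hY]
        rw [Finset.sum_add_distrib, Finset.sum_add_distrib]
        simp [hY]
      have hΔsum : -(q * n) ≤ ∑ i ∈ Finset.range n, Δ i ω := by
        have : ∀ i ∈ Finset.range n, -q ≤ Δ i ω := fun i _ => (abs_le.1 (hω i)).1
        calc -(q * n) = ∑ _i ∈ Finset.range n, (-q) := by
              simp [mul_comm]
          _ ≤ _ := Finset.sum_le_sum this
      have hS_le : ∑ i ∈ Finset.range n, (1 + Δ i ω + X i ω) ≤ t :=
        le_trans (le_abs_self _) hmem
      have hYle : Y ω ≤ -(ε / 2 * n) := by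
        have : (n:ℝ) - q * n + Y ω ≤ τ * n + c * Real.sqrt n := by
          rw [hsum] at hS_le
          linarith [le_trans hS_le htle]
        have hcn : c * Real.sqrt n ≤ ε / 2 * n := by
          calc c * Real.sqrt n ≤ (ε / 2 * Real.sqrt n) * Real.sqrt n :=
                mul_le_mul_of_nonneg_right hn1 hsqrtnn
            _ = ε / 2 * (Real.sqrt n * Real.sqrt n) := by ring
            _ = ε / 2 * n := by rw [Real.mul_self_sqrt (Nat.cast_nonneg n)]
        have hεn : ε * n = (n:ℝ) - q * n - τ * n := by rw [hε]; ring
        nlinarith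
      show ε / 2 * n ≤ |Y ω - 0|
      rw [sub_zero]
      calc ε / 2 * n ≤ -Y ω := by linarith
        _ ≤ |Y ω| := neg_le_abs _
    refine le_trans hsub (le_trans cheb ?_)
    -- variance computation
    have hvareq : variance Y P = n * v := hvar n
    rw [hvareq]
    have heq : (↑n * v) / (ε / 2 * ↑n) ^ 2 = 4 * v / ε ^ 2 / ↑n := by
      field_simp
      ring
    rw [heq]
  -- conclude
  have hcompl : Tendsto (fun n : ℕ =>
      P ({ω | Real.sqrt n * lam (τ * Real.sqrt n) <
        |∑ i ∈ Finset.range n, (1 + Δ i ω + X i ω)|}ᶜ)) atTop (nhds 0) := by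
    have hupper : Tendsto (fun n : ℕ => ENNReal.ofReal ((4 * v / ε ^ 2) / n)) atTop
        (nhds 0) := by
      have h0 := tendsto_const_div_atTop_nhds_zero_nat (4 * v / ε ^ 2)
      have := ENNReal.tendsto_ofReal (a := 0) h0
      simpa using this
    exact tendsto_of_tendsto_of_tendsto_of_le_of_le' tendsto_const_nhds hupper
      (Eventually.of_forall fun n => zero_le) key
  have hfin : Tendsto (fun n : ℕ =>
      1 - P ({ω | Real.sqrt n * lam (τ * Real.sqrt n) <
        |∑ i ∈ Finset.range n, (1 + Δ i ω + X i ω)|}ᶜ)) atTop (nhds 1) := by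
    have := ENNReal.Tendsto.sub (tendsto_const_nhds (x := (1:ENNReal))) hcompl
      (Or.inl ENNReal.one_ne_top)
    simpa using this
  refine hfin.congr fun n => ?_
  rw [prob_compl_eq_one_sub (hAmeas n), ENNReal.sub_sub_cancel ENNReal.one_ne_top
    prob_le_one]
end
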